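/- For every countable ordinal α > 0, every element x ≠ 0 of the α-th Cantor–Bendixson level ω₁^(α) \ ω₁^(α+1) of ω₁ can be written as x = x' + ω^α for some ordinal x' < x; conversely, ω^α lies in ω₁^(α) but not in ω₁^(α+1). -/

import Mathlib

noncomputable section
open Ordinal Set Topology

/-- The first uncountable ordinal `ω₁`, as a type, endowed with the order topology. -/
def Omega1 : Type 1 := Set.Iio (Ordinal.omega 1)

instance : LinearOrder Omega1 := inferInstanceAs (LinearOrder (Set.Iio (Ordinal.omega 1)))
instance : TopologicalSpace Omega1 := Preorder.topology Omega1
instance : OrderTopology Omega1 := ⟨rfl⟩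

/-- The underlying ordinal of a point of `ω₁`. -/
def Omega1.toOrdinal (x : Omega1) : Ordinal := Subtype.val x

theorem Omega1.toOrdinal_lt (x : Omega1) : x.toOrdinal < Ordinal.omega 1 := Subtype.prop x

/-- Build a point of `ω₁` from a countable ordinal. -/
def Omega1.mk (o : Ordinal) (h : o < Ordinal.omega 1) : Omega1 := Subtype.mk o h

/-- The group structure on the self-homeomorphism group of a topological space. -/
instance {X : Type*} [TopologicalSpace X] : Group (X ≃ₜ X) where
  mul g h := h.trans g
  one := Homeomorph.refl X
  inv := Homeomorph.symm
  mul_assoc _ _ _ := Homeomorph.ext fun _ => rfl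
  one_mul _ := Homeomorph.ext fun _ => rfl
  mul_one _ := Homeomorph.ext fun _ => rfl
  inv_mul_cancel g := Homeomorph.ext fun x => g.symm_apply_apply x

/-- The topology of pointwise convergence on the homeomorphism group of `ω₁`. -/
instance : TopologicalSpace (Omega1 ≃ₜ Omega1) :=
  TopologicalSpace.induced (fun g : Omega1 ≃ₜ Omega1 => (g : Omega1 → Omega1))
    Pi.topologicalSpace

/-- The set of limit (non-isolated) points of `A`, for the subspace topology on `A`. -/
def limitPoints {X : Type*} [TopologicalSpace X] (A : Set X) : Set X :=
  {x | x ∈ A ∧ ∀ U : Set X, IsOpen U → x ∈ U → ∃ y, y ∈ U ∩ A ∧ y ≠ x}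

/-- The `α`-th Cantor–Bendixson derived subset of a topological space `X`:
`X^(0) = X`, `X^(α+1)` is the set of limit points of `X^(α)`, and
`X^(λ) = ⋂_{β<λ} X^(β)` at limit stages. -/
def CBderiv (X : Type*) [TopologicalSpace X] (α : Ordinal) : Set X :=
  Ordinal.limitRecOn α Set.univ (fun _ ih => limitPoints ih)
    (fun o _ ih => ⋂ (β : Ordinal) (h : β < o), ih β h)

/-! ### Auxiliary lemmas -/

lemma omega1_isLimit : Order.IsSuccLimit (Ordinal.omega 1) := Cardinal.isSuccLimit_omega 1

lemma zero_lt_omega1 : (0 : Ordinal) < Ordinal.omega 1 := Ordinal.omega_pos 1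

lemma one_lt_omega1 : (1 : Ordinal) < Ordinal.omega 1 :=
  Ordinal.one_lt_omega0.trans Ordinal.omega0_lt_omega_one

lemma lt_omega1_iff_card {a : Ordinal} :
    a < Ordinal.omega 1 ↔ a.card ≤ Cardinal.aleph0 := by
  rw [← Cardinal.ord_aleph, Cardinal.lt_ord, ← Cardinal.succ_aleph0, Order.lt_succ_iff]

lemma opow_lt_omega1 (a : Ordinal) :
    a < Ordinal.omega 1 → Ordinal.omega0 ^ a < Ordinal.omega 1 := by
  induction a using Ordinal.limitRecOn with
  | zero => intro _; simpa using one_lt_omega1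
  | add_one o ih =>
    intro h
    have ho : o < Ordinal.omega 1 := (lt_add_one o).trans h
    rw [Ordinal.add_one_eq_succ, opow_succ, lt_omega1_iff_card, Ordinal.card_mul]
    have h1 : (Ordinal.omega0 ^ o).card ≤ Cardinal.aleph0 := lt_omega1_iff_card.1 (ih ho)
    calc (Ordinal.omega0 ^ o).card * (Ordinal.omega0).card
        ≤ Cardinal.aleph0 * Cardinal.aleph0 := by
          rw [Ordinal.card_omega0]; exact mul_le_mul' h1 le_rfl
      _ = Cardinal.aleph0 := Cardinal.aleph0_mul_aleph0
  | limit o ho ih =>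
    intro h
    have hcard : o.card ≤ Cardinal.aleph0 := lt_omega1_iff_card.1 h
    have hcnt : Countable (Iio o) := by
      refine Cardinal.mk_le_aleph0_iff.1 ?_
      rw [Ordinal.mk_Iio_ordinal]
      have := Cardinal.lift_le.2 hcard
      rwa [Cardinal.lift_aleph0] at this
    have hne : Nonempty (Iio o) := ⟨⟨0, ho.pos⟩⟩
    obtain ⟨f, hf⟩ := exists_surjective_nat (Iio o)
    have hlt : ∀ n, Ordinal.omega0 ^ ((f n : Ordinal)) < Ordinal.omega 1 :=
      fun n => ih _ (f n).2 ((f n).2.trans h)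
    have hsup0 : iSup (fun n => Ordinal.omega0 ^ ((f n : Ordinal))) < (Cardinal.aleph 1).ord := by
      refine Ordinal.iSup_lt_ord_lift ?_ fun n => ?_
      · rw [Cardinal.isRegular_aleph_one.cof_eq, Cardinal.mk_nat, Cardinal.lift_aleph0]
        exact Cardinal.aleph0_lt_aleph_one
      · rw [Cardinal.ord_aleph]; exact hlt n
    have hsup : iSup (fun n => Ordinal.omega0 ^ ((f n : Ordinal))) < Ordinal.omega 1 := by
      rwa [Cardinal.ord_aleph] at hsup0
    refine lt_of_le_of_lt ?_ hsup
    refine (Ordinal.opow_le_of_isSuccLimit Ordinal.omega0_ne_zero ho).2 fun b hb => ?_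
    obtain ⟨n, hn⟩ := hf ⟨b, hb⟩
    have : Ordinal.omega0 ^ b = Ordinal.omega0 ^ ((f n : Ordinal)) := by rw [hn]
    rw [this]
    exact Ordinal.le_iSup (fun n => Ordinal.omega0 ^ ((f n : Ordinal))) n

lemma Omega1.lt_iff {x y : Omega1} : x < y ↔ x.toOrdinal < y.toOrdinal := Iff.rfl

lemma Omega1.ext' {x y : Omega1} (h : x.toOrdinal = y.toOrdinal) : x = y := Subtype.ext h

lemma Omega1.succ_lt (x : Omega1) : x.toOrdinal + 1 < Ordinal.omega 1 := by
  rw [Ordinal.add_one_eq_succ]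
  exact omega1_isLimit.succ_lt x.toOrdinal_lt

/-! ### CBderiv unfolding lemmas -/

lemma CBderiv_zero (X : Type*) [TopologicalSpace X] : CBderiv X 0 = Set.univ := by
  rw [CBderiv, Ordinal.limitRecOn_zero]

lemma CBderiv_succ (X : Type*) [TopologicalSpace X] (α : Ordinal) :
    CBderiv X (Order.succ α) = limitPoints (CBderiv X α) := by
  rw [CBderiv, Ordinal.limitRecOn_succ]; rfl

lemma CBderiv_limit (X : Type*) [TopologicalSpace X] {l : Ordinal} (hl : Order.IsSuccLimit l) :
    CBderiv X l = ⋂ (β : Ordinal) (_ : β < l), CBderiv X β := by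
  rw [CBderiv, Ordinal.limitRecOn_limit _ _ _ _ hl]; rfl

/-! ### Characterization of limit points in `ω₁` -/

lemma mem_limitPoints (A : Set Omega1) (x : Omega1) :
    x ∈ limitPoints A ↔ x ∈ A ∧ x.toOrdinal ≠ 0 ∧
      ∀ a : Ordinal, a < x.toOrdinal →
        ∃ y ∈ A, a < y.toOrdinal ∧ y.toOrdinal < x.toOrdinal := by
  constructor
  · rintro ⟨hxA, hx⟩
    refine ⟨hxA, ?_, ?_⟩
    · intro h0
      obtain ⟨y, ⟨hyU, _⟩, hyx⟩ := hx (Set.Iio (Omega1.mk 1 one_lt_omega1)) isOpen_Iio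
        (by rw [Set.mem_Iio, Omega1.lt_iff, h0]; exact zero_lt_one)
      have hy0 : y.toOrdinal = 0 := Ordinal.lt_one_iff_zero.1 (Omega1.lt_iff.1 hyU)
      exact hyx (Omega1.ext' (by rw [hy0, h0]))
    · intro a ha
      set xs : Omega1 := Omega1.mk (x.toOrdinal + 1) x.succ_lt with hxs
      obtain ⟨y, ⟨⟨h1, h2⟩, hyA⟩, hyx⟩ := hx
        (Set.Ioo (Omega1.mk a (ha.trans x.toOrdinal_lt)) xs) isOpen_Ioo
        ⟨Omega1.lt_iff.2 ha, Omega1.lt_iff.2 (lt_add_one _)⟩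
      have h2' : y.toOrdinal ≤ x.toOrdinal := by
        have h2'' : y.toOrdinal < x.toOrdinal + 1 := Omega1.lt_iff.1 h2
        rwa [Ordinal.add_one_eq_succ, Order.lt_succ_iff] at h2''
      exact ⟨y, hyA, Omega1.lt_iff.1 h1,
        lt_of_le_of_ne h2' fun h => hyx (Omega1.ext' h)⟩
  · rintro ⟨hxA, h0, hcf⟩
    refine ⟨hxA, fun U hU hxU => ?_⟩
    have hl : ∃ l : Omega1, l < x :=
      ⟨Omega1.mk 0 zero_lt_omega1, Omega1.lt_iff.2 (pos_iff_ne_zero.2 h0)⟩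
    have hu : ∃ u : Omega1, x < u :=
      ⟨Omega1.mk (x.toOrdinal + 1) x.succ_lt, Omega1.lt_iff.2 (lt_add_one _)⟩
    obtain ⟨l, u, hmem, hsub⟩ :=
      (mem_nhds_iff_exists_Ioo_subset' hl hu).1 (hU.mem_nhds hxU)
    obtain ⟨y, hyA, h1, h2⟩ := hcf l.toOrdinal (Omega1.lt_iff.1 hmem.1)
    refine ⟨y, ⟨hsub ⟨Omega1.lt_iff.2 h1,
      Omega1.lt_iff.2 (h2.trans (Omega1.lt_iff.1 hmem.2))⟩, hyA⟩, ?_⟩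
    exact fun e => h2.ne (congrArg Omega1.toOrdinal e)

/-! ### Ordinal arithmetic lemmas -/

lemma dvd_succ_char {α x : Ordinal} (hx : x ≠ 0) :
    (Ordinal.omega0 ^ α ∣ x ∧ ∀ a < x, ∃ y, Ordinal.omega0 ^ α ∣ y ∧ a < y ∧ y < x) ↔
      Ordinal.omega0 ^ (α + 1) ∣ x := by
  have hpos : (0 : Ordinal) < Ordinal.omega0 ^ α := opow_pos α Ordinal.omega0_pos
  constructor
  · rintro ⟨⟨c, rfl⟩, hcf⟩
    have hc0 : c ≠ 0 := by rintro rfl; simp at hx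
    rcases Ordinal.zero_or_succ_or_isSuccLimit c with rfl | ⟨d, rfl⟩ | hlim
    · exact absurd rfl hc0
    · exfalso
      obtain ⟨y, ⟨e, rfl⟩, h1, h2⟩ := hcf (Ordinal.omega0 ^ α * d)
        (by rw [mul_lt_mul_iff_right₀ hpos]; exact Order.lt_succ d)
      rw [mul_lt_mul_iff_right₀ hpos] at h1 h2
      exact (Order.lt_succ_iff.1 h2).not_gt h1
    · obtain ⟨e, he⟩ := (Ordinal.isSuccLimit_iff_omega0_dvd.1 hlim).2
      exact ⟨e, by rw [he, Ordinal.add_one_eq_succ, opow_succ, mul_assoc]⟩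
  · rintro ⟨c, rfl⟩
    have hc0 : (0 : Ordinal) < c :=
      pos_iff_ne_zero.2 fun h => hx (by rw [h, mul_zero])
    have hrw : Ordinal.omega0 ^ (α + 1) * c =
        Ordinal.omega0 ^ α * (Ordinal.omega0 * c) := by
      rw [Ordinal.add_one_eq_succ, opow_succ, mul_assoc]
    constructor
    · exact ⟨Ordinal.omega0 * c, hrw⟩
    · intro a ha
      have hlim : Order.IsSuccLimit (Ordinal.omega0 * c) :=
        Ordinal.isSuccLimit_mul_left Ordinal.isSuccLimit_omega0 hc0
      rw [hrw] at ha
      obtain ⟨c', hc', ha'⟩ := (Ordinal.lt_mul_iff_of_isSuccLimit hlim).1 ha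
      refine ⟨Ordinal.omega0 ^ α * c', ⟨c', rfl⟩, ha', ?_⟩
      rw [hrw, mul_lt_mul_iff_right₀ hpos]
      exact hc'

lemma dvd_limit_char {l x : Ordinal} (hl : Order.IsSuccLimit l)
    (h : ∀ β < l, Ordinal.omega0 ^ β ∣ x) : Ordinal.omega0 ^ l ∣ x := by
  have hne : Ordinal.omega0 ^ l ≠ 0 := opow_ne_zero l Ordinal.omega0_ne_zero
  have hmod : x % (Ordinal.omega0 ^ l) = 0 := by
    by_contra hr
    have hrlt : x % (Ordinal.omega0 ^ l) < Ordinal.omega0 ^ l := Ordinal.mod_lt x hne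
    obtain ⟨β, hβ, hrβ⟩ := (Ordinal.lt_opow_of_isSuccLimit Ordinal.omega0_ne_zero hl).1 hrlt
    have h1 : Ordinal.omega0 ^ β ∣ Ordinal.omega0 ^ l * (x / Ordinal.omega0 ^ l) :=
      (Ordinal.opow_dvd_opow _ hβ.le).mul_right _
    have hdvd : Ordinal.omega0 ^ β ∣ x % (Ordinal.omega0 ^ l) :=
      (Ordinal.dvd_add_iff h1).1 (by rw [Ordinal.div_add_mod]; exact h β hβ)
    obtain ⟨w, hw⟩ := hdvd
    have hw0 : w ≠ 0 := by rintro rfl; rw [mul_zero] at hw; exact hr hw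
    have : Ordinal.omega0 ^ β ≤ x % (Ordinal.omega0 ^ l) := by
      rw [hw]
      conv_lhs => rw [← mul_one (Ordinal.omega0 ^ β)]
      exact mul_le_mul_right (Ordinal.one_le_iff_ne_zero.2 hw0) _
    exact hrβ.not_ge this
  exact ⟨x / Ordinal.omega0 ^ l, by
    conv_lhs => rw [← Ordinal.div_add_mod x (Ordinal.omega0 ^ l)]
    rw [hmod, add_zero]⟩

/-! ### The main characterization of the Cantor–Bendixson derivatives of `ω₁` -/

lemma CBderiv_omega1 (α : Ordinal) :
    CBderiv Omega1 α =
      {x : Omega1 | α = 0 ∨ (x.toOrdinal ≠ 0 ∧ Ordinal.omega0 ^ α ∣ x.toOrdinal)} := by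
  induction α using Ordinal.limitRecOn with
  | zero => rw [CBderiv_zero]; ext x; simp
  | add_one α ih =>
    ext x
    rw [Ordinal.add_one_eq_succ, CBderiv_succ, ih, mem_limitPoints]
    simp only [Set.mem_setOf_eq]
    constructor
    · rintro ⟨hxA, h0, hcf⟩
      refine Or.inr ⟨h0, ?_⟩
      have hdvd : Ordinal.omega0 ^ α ∣ x.toOrdinal := by
        rcases hxA with h | ⟨_, h⟩
        · rw [h, opow_zero]; exact one_dvd _
        · exact h
      rw [← Ordinal.add_one_eq_succ]
      refine (dvd_succ_char h0).1 ⟨hdvd, ?_⟩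
      intro a ha
      obtain ⟨y, hyA, h1, h2⟩ := hcf a ha
      refine ⟨y.toOrdinal, ?_, h1, h2⟩
      rcases hyA with h | ⟨_, h⟩
      · rw [h, opow_zero]; exact one_dvd _
      · exact h
    · rintro (h | ⟨h0, hdvd⟩)
      · exact absurd h (Order.succ_ne_bot α)
      · rw [← Ordinal.add_one_eq_succ] at hdvd
        obtain ⟨hd, hcf⟩ := (dvd_succ_char h0).2 hdvd
        refine ⟨Or.inr ⟨h0, hd⟩, h0, ?_⟩
        intro a ha
        obtain ⟨y, hy, h1, h2⟩ := hcf a ha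
        refine ⟨Omega1.mk y (h2.trans x.toOrdinal_lt), Or.inr ⟨?_, hy⟩, h1, h2⟩
        exact pos_iff_ne_zero.1 (lt_of_le_of_lt (zero_le (a := a)) h1)
  | limit l hl ih =>
    ext x
    rw [CBderiv_limit Omega1 hl]
    simp only [Set.mem_iInter, Set.mem_setOf_eq]
    constructor
    · intro h
      right
      have h1 := h 1 (Ordinal.one_lt_of_isSuccLimit hl)
      rw [ih 1 (Ordinal.one_lt_of_isSuccLimit hl)] at h1
      rcases h1 with h1 | ⟨h0, _⟩
      · exact absurd h1 one_ne_zero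
      refine ⟨h0, dvd_limit_char hl ?_⟩
      intro β hβ
      have hβ' := h β hβ
      rw [ih β hβ] at hβ'
      rcases hβ' with h' | ⟨_, h'⟩
      · rw [h', opow_zero]; exact one_dvd _
      · exact h'
    · rintro (h | ⟨h0, hdvd⟩) β hβ
      · exact absurd h hl.pos.ne'
      · rw [ih β hβ]
        exact Or.inr ⟨h0, (Ordinal.opow_dvd_opow _ hβ.le).trans hdvd⟩

/-- For a countable ordinal `α > 0`: every nonzero element of the `α`-th
Cantor–Bendixson level `ω₁^(α) \ ω₁^(α+1)` of `ω₁` is of the form `x' + ω^α`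
with `x' < x`; conversely `ω^α` lies in `ω₁^(α)` but not in `ω₁^(α+1)`. -/
theorem CBlevel_description (α : Ordinal) (h0 : 0 < α) (hα : α < Ordinal.omega 1) :
    (∀ x : Omega1, x ∈ CBderiv Omega1 α \ CBderiv Omega1 (α + 1) →
      x.toOrdinal ≠ 0 →
      ∃ x' : Ordinal, x' < x.toOrdinal ∧
        x.toOrdinal = x' + Ordinal.omega0 ^ α) ∧
    ∃ w : Omega1, w.toOrdinal = Ordinal.omega0 ^ α ∧
      w ∈ CBderiv Omega1 α ∧ w ∉ CBderiv Omega1 (α + 1) := by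
  have hpos : (0 : Ordinal) < Ordinal.omega0 ^ α := opow_pos α Ordinal.omega0_pos
  constructor
  · rintro x ⟨hmem, hnot⟩ hx0
    rw [CBderiv_omega1] at hmem hnot
    have hd : Ordinal.omega0 ^ α ∣ x.toOrdinal := by
      rcases hmem with h | ⟨_, h⟩
      · exact absurd h h0.ne'
      · exact h
    have hnd : ¬ Ordinal.omega0 ^ (α + 1) ∣ x.toOrdinal :=
      fun hc => hnot (Or.inr ⟨hx0, hc⟩)
    obtain ⟨c, hc⟩ := hd
    have hc0 : c ≠ 0 := by rintro rfl; rw [mul_zero] at hc; exact hx0 hc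
    rcases Ordinal.zero_or_succ_or_isSuccLimit c with rfl | ⟨d, rfl⟩ | hlim
    · exact absurd rfl hc0
    · refine ⟨Ordinal.omega0 ^ α * d, ?_, ?_⟩
      · rw [hc, mul_lt_mul_iff_right₀ hpos]; exact Order.lt_succ d
      · rw [hc, Ordinal.mul_succ]
    · exfalso
      apply hnd
      obtain ⟨e, he⟩ := (Ordinal.isSuccLimit_iff_omega0_dvd.1 hlim).2
      exact ⟨e, by rw [hc, he, Ordinal.add_one_eq_succ, opow_succ, mul_assoc]⟩
  · refine ⟨Omega1.mk (Ordinal.omega0 ^ α) (opow_lt_omega1 α hα), rfl, ?_, ?_⟩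
    · rw [CBderiv_omega1]
      exact Or.inr ⟨(opow_ne_zero α Ordinal.omega0_ne_zero), dvd_refl _⟩
    · rw [CBderiv_omega1]
      rintro (h | ⟨_, hdvd⟩)
      · rw [Ordinal.add_one_eq_succ] at h
        exact absurd h (Order.succ_ne_bot α)
      · have hle := Ordinal.le_of_dvd (opow_ne_zero α Ordinal.omega0_ne_zero) hdvd
        have hlt : Ordinal.omega0 ^ α < Ordinal.omega0 ^ (α + 1) :=
          (Ordinal.opow_lt_opow_iff_right Ordinal.one_lt_omega0).2 (lt_add_one α)
        exact hlt.not_ge hle
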